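/- Let E be a real locally convex topological vector space with dual E*, and T : E ⇉ E*. Then T is monotone if and only if for every x* ∈ E*, the map Γ_{T−x*} : E ⇉ E, Γ_{T−x*}(y) = {x ∈ E : ⟨y* − x*, y − x⟩ ≥ 0 for all y* ∈ T(y)}, is a KKM map; i.e., for every x* ∈ E*, every finite set {x_1,…,x_m} ⊆ D(T), and every x̄ in the convex hull of {x_1,…,x_m}, there exists i such that ⟨x_i* − x*, x_i − x̄⟩ ≥ 0 for all x_i* ∈ T(x_i). -/

import Mathlib

/-- `T` is monotone iff for every `x* ∈ E*` the map
`Γ_{T-x*}(y) = {x : ⟨y* - x*, y - x⟩ ≥ 0, ∀ y* ∈ T y}` is a KKM map. -/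
theorem monotone_iff_gamma_kkm {E : Type*} [AddCommGroup E] [Module ℝ E]
    [TopologicalSpace E] [IsTopologicalAddGroup E] [ContinuousSMul ℝ E]
    [LocallyConvexSpace ℝ E] [T2Space E]
    (T : E → Set (E →L[ℝ] ℝ)) :
    (∀ x y (x' y' : E →L[ℝ] ℝ), x' ∈ T x → y' ∈ T y → 0 ≤ (y' - x') (y - x)) ↔
    (∀ z : E →L[ℝ] ℝ, ∀ A : Finset E, (↑A : Set E) ⊆ {x | (T x).Nonempty} →
      convexHull ℝ (↑A : Set E) ⊆
        ⋃ y ∈ A, {x : E | ∀ y' ∈ T y, 0 ≤ (y' - z) (y - x)}) := by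
  classical
  constructor
  · intro hmono z A hA x hx
    by_contra h
    simp only [Set.mem_iUnion, Set.mem_setOf_eq, not_exists, not_forall, not_le] at h
    -- h : ∀ y, y ∈ A → ∃ y' ∈ T y, (y' - z) (y - x) < 0
    have key : ∀ y : E, ∃ g : E →L[ℝ] ℝ, y ∈ A → g ∈ T y ∧ (g - z) (y - x) < 0 := by
      intro y
      by_cases hy : y ∈ A
      · obtain ⟨g, hg1, hg2⟩ := h y hy
        exact ⟨g, fun _ => ⟨hg1, hg2⟩⟩
      · exact ⟨0, fun hy' => absurd hy' hy⟩
    choose f hf using key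
    rw [Finset.convexHull_eq] at hx
    obtain ⟨w, hw0, hw1, hwx⟩ := hx
    have hxrep : x = ∑ j ∈ A, w j • j := by
      rw [← hwx, Finset.centerMass, hw1, inv_one, one_smul]
      simp
    set S : ℝ := ∑ i ∈ A, w i * ((f i - z) (i - x)) with hS
    have hSneg : S < 0 := by
      obtain ⟨i₀, hi₀, hwi₀⟩ : ∃ i ∈ A, 0 < w i := by
        by_contra hc
        push_neg at hc
        have : (∑ i ∈ A, w i) ≤ 0 := Finset.sum_nonpos hc
        linarith
      have : S < ∑ i ∈ A, (0 : ℝ) := by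
        apply Finset.sum_lt_sum
        · intro i hi
          exact mul_nonpos_of_nonneg_of_nonpos (hw0 i hi) (le_of_lt (hf i hi).2)
        · exact ⟨i₀, hi₀, mul_neg_of_pos_of_neg hwi₀ (hf i₀ hi₀).2⟩
      simpa using this
    have hSeq : S = ∑ i ∈ A, ∑ j ∈ A, (w i * w j) * ((f i - z) (i - j)) := by
      apply Finset.sum_congr rfl
      intro i hi
      have hgx : (f i - z) x = ∑ j ∈ A, w j * ((f i - z) j) := by
        rw [hxrep, map_sum]
        simp [smul_eq_mul]
      have hgi : (f i - z) i = ∑ j ∈ A, w j * ((f i - z) i) := by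
        rw [← Finset.sum_mul, hw1, one_mul]
      rw [map_sub, hgx, hgi, ← Finset.sum_sub_distrib, Finset.mul_sum]
      apply Finset.sum_congr rfl
      intro j hj
      rw [map_sub]
      ring
    have hSnn : 0 ≤ S := by
      have h2 : S * 2 = ∑ i ∈ A, ∑ j ∈ A, (w i * w j) * ((f i - f j) (i - j)) := by
        have hswap : S = ∑ i ∈ A, ∑ j ∈ A, (w j * w i) * ((f j - z) (j - i)) := by
          rw [hSeq]; exact Finset.sum_comm
        calc S * 2 = (∑ i ∈ A, ∑ j ∈ A, (w i * w j) * ((f i - z) (i - j)))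
              + ∑ i ∈ A, ∑ j ∈ A, (w j * w i) * ((f j - z) (j - i)) := by
                rw [← hSeq, ← hswap]; ring
          _ = ∑ i ∈ A, ∑ j ∈ A, ((w i * w j) * ((f i - z) (i - j))
              + (w j * w i) * ((f j - z) (j - i))) := by
                rw [← Finset.sum_add_distrib]
                exact Finset.sum_congr rfl fun i _ => (Finset.sum_add_distrib).symm
          _ = ∑ i ∈ A, ∑ j ∈ A, (w i * w j) * ((f i - f j) (i - j)) := by
                apply Finset.sum_congr rfl; intro i _
                apply Finset.sum_congr rfl; intro j _
                have : (f j - z) (j - i) = -((f j - z) (i - j)) := by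
                  rw [← map_neg]; congr 1; abel
                rw [this]
                simp only [ContinuousLinearMap.sub_apply]
                ring
      nlinarith [Finset.sum_nonneg (fun i (hi : i ∈ A) =>
        Finset.sum_nonneg (fun j (hj : j ∈ A) =>
          mul_nonneg (mul_nonneg (hw0 i hi) (hw0 j hj))
            (hmono j i (f j) (f i) (hf j hj).1 (hf i hi).1)))]
    linarith
  · intro hkkm x y x' y' hx' hy'
    by_cases hxy : x = y
    · subst hxy; simp
    · set A : Finset E := {x, y} with hA
      have hAsub : (↑A : Set E) ⊆ {p | (T p).Nonempty} := by
        intro p hp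
        simp only [hA, Finset.coe_insert, Finset.coe_singleton,
          Set.mem_insert_iff, Set.mem_singleton_iff] at hp
        rcases hp with rfl | rfl
        · exact ⟨x', hx'⟩
        · exact ⟨y', hy'⟩
      set z : E →L[ℝ] ℝ := (1/2 : ℝ) • (x' + y') with hz
      set m : E := (1/2 : ℝ) • x + (1/2 : ℝ) • y with hm
      have hmid : m ∈ convexHull ℝ (↑A : Set E) := by
        have : (↑A : Set E) = {x, y} := by simp [hA]
        rw [this]
        exact segment_subset_convexHull (by simp) (by simp)
          ⟨1/2, 1/2, by norm_num, by norm_num, by norm_num, rfl⟩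
      have := hkkm z A hAsub hmid
      simp only [Set.mem_iUnion, Set.mem_setOf_eq] at this
      obtain ⟨p, hp, hpall⟩ := this
      simp only [hA, Finset.mem_insert, Finset.mem_singleton] at hp
      rcases hp with rfl | rfl
      · have h := hpall x' hx'
        simp only [hz, hm, ContinuousLinearMap.sub_apply, ContinuousLinearMap.smul_apply,
          ContinuousLinearMap.add_apply, map_sub, map_add, map_smul, smul_eq_mul] at h ⊢
        linarith
      · have h := hpall y' hy'
        simp only [hz, hm, ContinuousLinearMap.sub_apply, ContinuousLinearMap.smul_apply,
          ContinuousLinearMap.add_apply, map_sub, map_add, map_smul, smul_eq_mul] at h ⊢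
        linarith
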